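/- A connected simple graph G is distance critical if and only if every vertex v of G admits a determining pair, i.e., there exist two distinct nonadjacent vertices a and b whose unique common neighbor is v. -/

import Mathlib

/-- A graph is *distance critical* if for every vertex `v` there is a pair of vertices of
`G − v` whose distance in `G − v` differs from their distance in `G`
(distances are `ℕ∞`-valued, `⊤` when there is no connecting path). -/
def IsDistanceCritical {V : Type*} (G : SimpleGraph V) : Prop :=
  ∀ v : V, ∃ x y : ({v}ᶜ : Set V),
    (G.induce ({v}ᶜ : Set V)).edist x y ≠ G.edist (x : V) (y : V)

/-- `{a, b}` is a *determining pair* for `v` : `a` and `b` are distinct, nonadjacent,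
and `v` is their unique common neighbor. -/
def IsDeterminingPair {V : Type*} (G : SimpleGraph V) (v a b : V) : Prop :=
  a ≠ b ∧ ¬ G.Adj a b ∧ G.Adj a v ∧ G.Adj b v ∧
    ∀ w : V, G.Adj a w → G.Adj b w → w = v

open SimpleGraph

/-- A walk whose support lies in `s` lifts to a walk in the induced graph of the same length. -/
lemma exists_induce_walk {V : Type*} {G : SimpleGraph V} {s : Set V} :
    ∀ {x y : V} (p : G.Walk x y), (∀ u ∈ p.support, u ∈ s) → ∀ (hx : x ∈ s) (hy : y ∈ s),
      ∃ q : (G.induce s).Walk ⟨x, hx⟩ ⟨y, hy⟩, q.length = p.length := by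
  intro x y p
  induction p with
  | nil => exact fun _ hx hy => ⟨.nil, rfl⟩
  | @cons x b y h p ih =>
    intro hs hx hy
    have hb : b ∈ s := hs b (by simp)
    obtain ⟨q, hq⟩ := ih (fun u hu => hs u (by simp [hu])) hb hy
    exact ⟨.cons (by exact h) q, by exact congrArg (· + 1) hq⟩

lemma edist_le_induce {V : Type*} {G : SimpleGraph V} {s : Set V} (x y : s) :
    G.edist x y ≤ (G.induce s).edist x y := by
  rcases eq_or_ne ((G.induce s).edist x y) ⊤ with h | h
  · simp [h]
  obtain ⟨p, hp⟩ := exists_walk_of_edist_ne_top h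
  rw [← hp]
  calc G.edist (x : V) y ≤ ((p.map (Embedding.induce s).toHom).length : ℕ∞) := edist_le _
    _ = (p.length : ℕ∞) := by exact congrArg Nat.cast (Walk.length_map _ _)

theorem stmt_0 {V : Type*} [Fintype V] (G : SimpleGraph V) (hconn : G.Connected) :
    IsDistanceCritical G ↔ ∀ v : V, ∃ a b : V, IsDeterminingPair G v a b := by
  classical
  constructor
  · intro hd v
    obtain ⟨x, y, hxy⟩ := hd v
    have hlt : G.edist (x : V) y < (G.induce ({v}ᶜ : Set V)).edist x y :=
      (edist_le_induce x y).lt_of_ne (Ne.symm hxy)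
    -- a shortest path from x to y
    obtain ⟨p0, hp0⟩ := (hconn (x : V) y).exists_walk_length_eq_edist
    set p := p0.bypass with hpdef
    have hpath : p.IsPath := p0.bypass_isPath
    have hple : (p.length : ℕ∞) ≤ G.edist (x : V) y := by
      rw [← hp0]; exact_mod_cast p0.length_bypass_le
    have hplen : (p.length : ℕ∞) = G.edist (x : V) y :=
      le_antisymm hple (edist_le p)
    have hmin : ∀ (W : G.Walk (x : V) y), p.length ≤ W.length := by
      intro W
      have := edist_le W
      rw [← hplen] at this
      exact_mod_cast this
    -- v must be on p
    have hv : v ∈ p.support := by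
      by_contra hv
      obtain ⟨q, hq⟩ := exists_induce_walk p
        (fun u hu => by
          simp only [Set.mem_compl_iff, Set.mem_singleton_iff]
          rintro rfl; exact hv hu) x.2 y.2
      have : (G.induce ({v}ᶜ : Set V)).edist x y ≤ (p.length : ℕ∞) := by
        rw [← hq]; exact edist_le q
      exact absurd (lt_of_lt_of_le hlt this) (by rw [hplen]; exact lt_irrefl _)
    have hvx : v ≠ (x : V) := fun h => x.2 (by simp [h])
    have hvy : v ≠ (y : V) := fun h => y.2 (by simp [h])
    set q := p.takeUntil v hv with hqdef
    set r := p.dropUntil v hv with hrdef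
    have hqr : q.append r = p := p.take_spec hv
    have hlen : q.length + r.length = p.length := by
      rw [← hqr, SimpleGraph.Walk.length_append]
    have hqpath : q.IsPath := hpath.takeUntil hv
    have hrpath : r.IsPath := hpath.dropUntil hv
    -- decompose r = cons hb r'
    obtain ⟨b, hb, r', hr'⟩ := SimpleGraph.Walk.exists_eq_cons_of_ne hvy r
    have hrpath' : (SimpleGraph.Walk.cons hb r').IsPath := hr' ▸ hrpath
    have hvr' : v ∉ r'.support := ((SimpleGraph.Walk.cons_isPath_iff hb r').mp hrpath').2
    have hr'path : r'.IsPath := ((SimpleGraph.Walk.cons_isPath_iff hb r').mp hrpath').1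
    have hrlen : r.length = r'.length + 1 := by rw [hr']; simp
    -- decompose q.reverse = cons ha q2
    have hqrev : q.reverse.IsPath := hqpath.reverse
    obtain ⟨a, ha, q2, hq'⟩ := SimpleGraph.Walk.exists_eq_cons_of_ne hvx q.reverse
    have hqpath' : (SimpleGraph.Walk.cons ha q2).IsPath := hq' ▸ hqrev
    have hvq2 : v ∉ q2.support := ((SimpleGraph.Walk.cons_isPath_iff ha q2).mp hqpath').2
    have hqlen : q.length = q2.length + 1 := by
      have := congrArg (SimpleGraph.Walk.length) hq'
      simp only [SimpleGraph.Walk.length_reverse, SimpleGraph.Walk.length_cons] at this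
      omega
    have hlen2 : q2.length + r'.length + 2 = p.length := by omega
    refine ⟨a, b, ?_, ?_, ha.symm, hb.symm, ?_⟩
    · -- a ≠ b
      intro hab
      subst hab
      have W : G.Walk (x : V) y := q2.reverse.append r'
      have := hmin (q2.reverse.append r')
      simp only [SimpleGraph.Walk.length_append, SimpleGraph.Walk.length_reverse] at this
      omega
    · -- ¬ Adj a b
      intro hab
      have := hmin (q2.reverse.append (SimpleGraph.Walk.cons hab r'))
      simp only [SimpleGraph.Walk.length_append, SimpleGraph.Walk.length_reverse,
        SimpleGraph.Walk.length_cons] at this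
      omega
    · -- uniqueness of common neighbor
      intro w haw hbw
      by_contra hwv
      set W : G.Walk (x : V) y :=
        q2.reverse.append (SimpleGraph.Walk.cons haw (SimpleGraph.Walk.cons hbw.symm r'))
        with hWdef
      have hWlen : W.length = p.length := by
        simp only [hWdef, SimpleGraph.Walk.length_append, SimpleGraph.Walk.length_reverse,
          SimpleGraph.Walk.length_cons]
        omega
      have hWsupp : ∀ u ∈ W.support, u ∈ ({v}ᶜ : Set V) := by
        intro u hu
        simp only [Set.mem_compl_iff, Set.mem_singleton_iff]
        rintro rfl
        rw [hWdef, SimpleGraph.Walk.mem_support_append_iff] at hu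
        rcases hu with hu | hu
        · rw [SimpleGraph.Walk.support_reverse, List.mem_reverse] at hu
          exact hvq2 hu
        · simp only [SimpleGraph.Walk.support_cons, List.mem_cons] at hu
          rcases hu with hu | hu | hu
          · exact ha.ne hu
          · exact hwv hu.symm
          · exact hvr' hu
      obtain ⟨Q, hQ⟩ := exists_induce_walk W hWsupp x.2 y.2
      have : (G.induce ({v}ᶜ : Set V)).edist x y ≤ (p.length : ℕ∞) := by
        rw [← hWlen, ← hQ]
        exact edist_le Q
      exact absurd (lt_of_lt_of_le hlt this) (by rw [hplen]; exact lt_irrefl _)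
  · intro h v
    obtain ⟨a, b, hab, hnadj, hav, hbv, huniq⟩ := h v
    have hav' : a ∈ ({v}ᶜ : Set V) := by simpa using hav.ne
    have hbv' : b ∈ ({v}ᶜ : Set V) := by simpa using hbv.ne
    refine ⟨⟨a, hav'⟩, ⟨b, hbv'⟩, ?_⟩
    -- G.edist a b = 2
    have h2 : G.edist a b ≤ 2 := by
      have := edist_le (SimpleGraph.Walk.cons hav (SimpleGraph.Walk.cons hbv.symm .nil))
      simpa using this
    have hne : G.edist a b ≠ ⊤ := fun h => by simp [h] at h2
    obtain ⟨W, hW⟩ := exists_walk_of_edist_ne_top hne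
    have hWle : W.length ≤ 2 := by
      rw [← hW] at h2; exact_mod_cast h2
    have hW0 : W.length ≠ 0 := fun h => hab (SimpleGraph.Walk.eq_of_length_eq_zero h)
    have hW1 : W.length ≠ 1 := fun h => hnadj (SimpleGraph.Walk.adj_of_length_eq_one h)
    have hW2 : W.length = 2 := by omega
    have heq2 : G.edist a b = 2 := by rw [← hW, hW2]; rfl
    rw [heq2]
    -- induced edist ≠ 2
    intro hcontra
    have : ((2 : ℕ) : ℕ∞) = (2 : ℕ∞) := rfl
    obtain ⟨Q, hQ⟩ := exists_walk_of_edist_eq_coe (k := 2) (by rw [hcontra]; norm_cast)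
    cases Q with
    | nil => simp at hQ
    | @cons _ m _ hm Q' =>
      cases Q' with
      | nil => simp at hQ
      | @cons _ m' _ hm' Q'' =>
    have hQ'' : Q''.length = 0 := by
      simp only [SimpleGraph.Walk.length_cons] at hQ; omega
    have hm'b : m' = ⟨b, hbv'⟩ := SimpleGraph.Walk.eq_of_length_eq_zero hQ''
    subst hm'b
    have haw : G.Adj a (m : V) := hm
    have hbw : G.Adj b (m : V) := hm'.symm
    exact m.2 (huniq (m : V) haw hbw)
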